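/- Let G=(V,E) be a simple r-rank n-vertex hypergraph with min-cut capacity λ, and let (C, V∖C) be a min-cut with t := |C| = min{|C|,|V∖C|} satisfying r ≤ t < (λ/2)^{1/r}. Then there exists a vertex v ∈ C with degree |δ(v)| < λ, a contradiction; hence no min-cut (C,V∖C) with min{|C|,|V∖C|} ≥ r can have min{|C|,|V∖C|} < (λ/2)^{1/r}. -/

import Mathlib

open Finset

/-- The capacity of the cut `(C, V ∖ C)`: the number of hyperedges intersecting
both `C` and its complement. -/
def cutCap {V : Type*} [Fintype V] [DecidableEq V]
    (E : Finset (Finset V)) (C : Finset V) : ℕ :=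
  (E.filter (fun e => (e ∩ C).Nonempty ∧ (e ∩ Cᶜ).Nonempty)).card

/-- `(C, V ∖ C)` is a min-cut: both sides are nonempty and the capacity is
minimum among all cuts. -/
def IsMinCut {V : Type*} [Fintype V] [DecidableEq V]
    (E : Finset (Finset V)) (C : Finset V) : Prop :=
  C.Nonempty ∧ Cᶜ.Nonempty ∧
    ∀ D : Finset V, D.Nonempty → Dᶜ.Nonempty → cutCap E C ≤ cutCap E D

lemma sum_choose_le_pow (s m : ℕ) :
    ∑ k ∈ Finset.range (m + 1), s.choose k ≤ (s + 1) ^ m := by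
  induction m with
  | zero => simp
  | succ m ih =>
    rw [Finset.sum_range_succ]
    have h1 : s.choose (m + 1) ≤ s ^ (m + 1) := Nat.choose_le_pow _ _
    have h2 : s ^ (m + 1) ≤ s * (s + 1) ^ m := by
      rw [pow_succ']
      exact Nat.mul_le_mul_left s (Nat.pow_le_pow_left (Nat.le_succ s) m)
    calc ∑ k ∈ Finset.range (m + 1), s.choose k + s.choose (m + 1)
        ≤ (s + 1) ^ m + s * (s + 1) ^ m := by omega
      _ = (s + 1) ^ (m + 1) := by ring

/-- In a simple `r`-rank hypergraph with min-cut capacity `λ`,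
no min-cut `(C, V∖C)` with `min{|C|,|V∖C|} ≥ r` can have
`min{|C|,|V∖C|} < (λ/2)^{1/r}`. -/
theorem no_min_cut_of_size_between_r_and_root
    {V : Type*} [Fintype V] [DecidableEq V]
    (E : Finset (Finset V)) (r : ℕ) (hr : 2 ≤ r)
    (hsimple : ∀ e ∈ E, 2 ≤ e.card ∧ e.card ≤ r)
    (C : Finset V) (hC : IsMinCut E C)
    (hsmaller : C.card = min C.card Cᶜ.card)
    (ht : r ≤ C.card) :
    ((cutCap E C : ℝ) / 2) ^ ((1 : ℝ) / r) ≤ (C.card : ℝ) := by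
  classical
  obtain ⟨hCne, hCcne, hmin⟩ := hC
  set t := C.card with htdef
  set lam := cutCap E C with hlamdef
  set X := E.filter (fun e => (e ∩ C).Nonempty ∧ (e ∩ Cᶜ).Nonempty) with hX
  have hXcard : X.card = lam := rfl
  -- each crossing edge meets C in at most r-1 vertices
  have hcrossC : ∀ e ∈ X, (e ∩ C).card + 1 ≤ r := by
    intro e he
    rw [hX, mem_filter] at he
    obtain ⟨heE, h1, h2⟩ := he
    have hss : e ∩ C ⊂ e := by
      refine (Finset.ssubset_iff_of_subset Finset.inter_subset_left).mpr ?_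
      obtain ⟨x, hx⟩ := h2
      rw [mem_inter, mem_compl] at hx
      exact ⟨x, hx.1, fun hm => hx.2 (mem_inter.mp hm).2⟩
    have h3 := Finset.card_lt_card hss
    have h4 := (hsimple e heE).2
    omega
  -- double counting / averaging
  have hsum : ∑ v ∈ C, (X.filter (fun e => v ∈ e)).card ≤ (r - 1) * lam := by
    have heq : ∑ v ∈ C, (X.filter (fun e => v ∈ e)).card
        = ∑ e ∈ X, (e ∩ C).card := by
      simp_rw [Finset.card_filter]
      rw [Finset.sum_comm]
      refine Finset.sum_congr rfl fun e _ => ?_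
      rw [← Finset.card_filter, Finset.filter_mem_eq_inter, Finset.inter_comm]
    rw [heq]
    calc ∑ e ∈ X, (e ∩ C).card ≤ ∑ _e ∈ X, (r - 1) :=
          Finset.sum_le_sum fun e he => by have := hcrossC e he; omega
      _ = X.card * (r - 1) := by rw [Finset.sum_const, smul_eq_mul]
      _ = (r - 1) * lam := by rw [hXcard, mul_comm]
  obtain ⟨v, hvC, hv⟩ :
      ∃ v ∈ C, t * (X.filter (fun e => v ∈ e)).card ≤ (r - 1) * lam := by
    by_contra h
    push_neg at h
    have hlt : ∑ v ∈ C, (r - 1) * lam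
        < ∑ v ∈ C, t * (X.filter (fun e => v ∈ e)).card :=
      Finset.sum_lt_sum_of_nonempty hCne fun v hv => h v hv
    rw [Finset.sum_const, smul_eq_mul, ← Finset.mul_sum] at hlt
    exact absurd (lt_of_lt_of_le hlt (Nat.mul_le_mul_left t hsum)) (lt_irrefl _)
  -- count edges inside C containing v
  set I := E.filter (fun e => v ∈ e ∧ e ⊆ C) with hI
  have hIcard : I.card ≤ t ^ (r - 1) := by
    have hinj : ∀ e ∈ I,
        e.erase v ∈ ((C.erase v).powerset.filter (fun S => S.card ≤ r - 1)) := by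
      intro e he
      rw [hI, mem_filter] at he
      obtain ⟨heE, hve, heC⟩ := he
      rw [mem_filter, mem_powerset]
      refine ⟨Finset.erase_subset_erase v heC, ?_⟩
      have h1 := (hsimple e heE).2
      have h2 : (e.erase v).card = e.card - 1 := Finset.card_erase_of_mem hve
      omega
    have hcard1 : I.card
        ≤ ((C.erase v).powerset.filter (fun S => S.card ≤ r - 1)).card := by
      apply Finset.card_le_card_of_injOn (fun e => e.erase v) (fun e he => hinj e he)
      intro a ha b hb hab
      rw [hI, Finset.mem_coe, mem_filter] at ha hb
      rw [← Finset.insert_erase ha.2.1, ← Finset.insert_erase hb.2.1]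
      simp only at hab
      rw [hab]
    have hcard2 : ((C.erase v).powerset.filter (fun S => S.card ≤ r - 1)).card
        ≤ ∑ k ∈ Finset.range r, ((C.erase v).powersetCard k).card := by
      refine le_trans (Finset.card_le_card ?_) (Finset.card_biUnion_le)
      intro S hS
      rw [mem_filter, mem_powerset] at hS
      rw [Finset.mem_biUnion]
      exact ⟨S.card, Finset.mem_range.mpr (by omega),
        Finset.mem_powersetCard.mpr ⟨hS.1, rfl⟩⟩
    have hcard3 : ∑ k ∈ Finset.range r, ((C.erase v).powersetCard k).card
        ≤ t ^ (r - 1) := by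
      have hce : (C.erase v).card = t - 1 := by
        rw [Finset.card_erase_of_mem hvC]
      simp_rw [Finset.card_powersetCard, hce]
      have h4 := sum_choose_le_pow (t - 1) (r - 1)
      have ht1 : t - 1 + 1 = t := by omega
      have hr1 : r - 1 + 1 = r := by omega
      rw [hr1, ht1] at h4
      exact h4
    omega
  -- degree bound : lam ≤ deg v ≤ |I| + cross v
  have hdeg : lam ≤ I.card + (X.filter (fun e => v ∈ e)).card := by
    have hvc : ({v} : Finset V)ᶜ.Nonempty := by
      obtain ⟨w, hw⟩ := hCcne
      rw [mem_compl] at hw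
      refine ⟨w, ?_⟩
      rw [mem_compl, mem_singleton]
      intro h; exact hw (h ▸ hvC)
    have h1 : lam ≤ cutCap E {v} := hmin {v} (Finset.singleton_nonempty v) hvc
    have h2 : cutCap E {v} ≤ (I ∪ X.filter (fun e => v ∈ e)).card := by
      rw [cutCap]
      apply Finset.card_le_card
      intro e he
      rw [mem_filter] at he
      obtain ⟨heE, h3, h4⟩ := he
      have hve : v ∈ e := by
        obtain ⟨x, hx⟩ := h3
        rw [mem_inter, mem_singleton] at hx
        exact hx.2 ▸ hx.1
      rw [Finset.mem_union, hI, hX, mem_filter, mem_filter, mem_filter]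
      by_cases hec : e ⊆ C
      · exact Or.inl ⟨heE, hve, hec⟩
      · refine Or.inr ⟨⟨heE, ⟨v, mem_inter.mpr ⟨hve, hvC⟩⟩, ?_⟩, hve⟩
        obtain ⟨x, hxe, hxc⟩ := Finset.not_subset.mp hec
        exact ⟨x, mem_inter.mpr ⟨hxe, mem_compl.mpr hxc⟩⟩
    calc lam ≤ (I ∪ X.filter (fun e => v ∈ e)).card := h1.trans h2
      _ ≤ I.card + (X.filter (fun e => v ∈ e)).card := Finset.card_union_le _ _
  -- arithmetic: lam ≤ t ^ r
  have hkey : lam ≤ t ^ r := by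
    have h1 : t * lam ≤ t ^ r + (r - 1) * lam := by
      calc t * lam ≤ t * (I.card + (X.filter (fun e => v ∈ e)).card) :=
            Nat.mul_le_mul_left t hdeg
        _ = t * I.card + t * (X.filter (fun e => v ∈ e)).card := by ring
        _ ≤ t ^ r + (r - 1) * lam := by
            refine add_le_add ?_ hv
            calc t * I.card ≤ t * t ^ (r - 1) := Nat.mul_le_mul_left t hIcard
              _ = t ^ r := by rw [← pow_succ']; congr 1; omega
    have h2 : lam * (t - (r - 1)) + (r - 1) * lam = t * lam := by
      have hs : t - (r - 1) + (r - 1) = t := by omega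
      calc lam * (t - (r - 1)) + (r - 1) * lam
          = lam * ((t - (r - 1)) + (r - 1)) := by ring
        _ = lam * t := by rw [hs]
        _ = t * lam := mul_comm _ _
    rw [← h2] at h1
    have h3 : lam * (t - (r - 1)) ≤ t ^ r := le_of_add_le_add_right h1
    have h4 : lam ≤ lam * (t - (r - 1)) :=
      Nat.le_mul_of_pos_right lam (by omega)
    exact h4.trans h3
  -- pass to reals
  have hreal : (lam : ℝ) / 2 ≤ (t : ℝ) ^ (r : ℕ) := by
    have h5 : (lam : ℝ) ≤ (t : ℝ) ^ (r : ℕ) := by exact_mod_cast hkey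
    have h6 : (0 : ℝ) ≤ (lam : ℝ) := Nat.cast_nonneg _
    linarith
  have hrne : (r : ℝ) ≠ 0 := Nat.cast_ne_zero.mpr (by omega)
  calc ((lam : ℝ) / 2) ^ ((1 : ℝ) / r)
      ≤ ((t : ℝ) ^ (r : ℕ)) ^ ((1 : ℝ) / r) :=
        Real.rpow_le_rpow (by positivity) hreal (by positivity)
    _ = (t : ℝ) := by
        rw [← Real.rpow_natCast (t : ℝ) r, ← Real.rpow_mul (Nat.cast_nonneg t),
          mul_one_div, div_self hrne, Real.rpow_one]
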